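/- From conditional o_P to unconditional o_P (Lemma cond_to_op). Let ℱ_n be a sequence of sub-σ-algebras and A_n ≥ 0 a sequence of nonnegative integrable random variables. If the conditional expectations E(A_n | ℱ_n) converge to 0 in probability, then A_n converges to 0 in probability. -/

import Mathlib

open MeasureTheory ProbabilityTheory Filter

noncomputable section

/-- A sequence of real-valued random variables converges in probability to a constant `c`. -/
def TendstoInProb {Ω : Type*} [MeasurableSpace Ω] (P : Measure Ω)
    (X : ℕ → Ω → ℝ) (c : ℝ) : Prop :=
  ∀ ε : ℝ, 0 < ε → Tendsto (fun n => P {ω | ε ≤ |X n ω - c|}) atTop (nhds 0)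

/-- **Lemma (cond_to_op).** Let `F n` be a sequence of sub-σ-algebras and `A n ≥ 0` a sequence
of nonnegative integrable random variables. If the conditional expectations `E(A n | F n)`
converge to `0` in probability, then `A n` converges to `0` in probability. -/
theorem cond_to_op {Ω : Type*} [m0 : MeasurableSpace Ω] (P : Measure Ω)
    [IsProbabilityMeasure P]
    (A : ℕ → Ω → ℝ) (hA : ∀ n ω, 0 ≤ A n ω)
    (hint : ∀ n, Integrable (A n) P)
    (F : ℕ → MeasurableSpace Ω) (hF : ∀ n, F n ≤ m0)
    (h : TendstoInProb P (fun n ω => (P[A n | F n]) ω) 0) :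
    TendstoInProb P A 0 := by
  intro ε hε
  rw [ENNReal.tendsto_atTop_zero]
  intro δ hδ
  set r : ENNReal := min δ 1 with hr
  have hr0 : 0 < r := lt_min hδ one_pos
  have hrtop : r ≠ ⊤ := ne_top_of_le_ne_top ENNReal.one_ne_top (min_le_right _ _)
  have hrt : 0 < r.toReal := ENNReal.toReal_pos hr0.ne' hrtop
  set t : ℝ := r.toReal / 2 with ht
  have ht0 : 0 < t := by positivity
  set η : ℝ := ε * t with hη
  have hη0 : 0 < η := mul_pos hε ht0
  have hr2 : (0 : ENNReal) < r / 2 := ENNReal.div_pos hr0.ne' (by norm_num)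
  have hev : ∀ᶠ n in atTop, P {ω | η ≤ |(P[A n | F n]) ω - 0|} < r / 2 :=
    (h η hη0).eventually_lt_const hr2
  have hoft : ENNReal.ofReal t = r / 2 := by
    rw [ht, ENNReal.ofReal_div_of_pos (by norm_num), ENNReal.ofReal_toReal hrtop]
    norm_num
  rw [eventually_atTop] at hev
  obtain ⟨N, hN⟩ := hev
  refine ⟨N, fun n hn => ?_⟩
  have hnb := hN n hn
  set En : Ω → ℝ := P[A n | F n] with hEn
  have hEnm : StronglyMeasurable[F n] En := stronglyMeasurable_condExp
  set C : Set Ω := {ω | En ω < η} with hC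
  have hCF : MeasurableSet[F n] C := hEnm.measurable measurableSet_Iio
  have hCm : MeasurableSet C := hF n _ hCF
  -- split
  have hsplit : P {ω | ε ≤ |A n ω - 0|} ≤ P ({ω | ε ≤ A n ω} ∩ C) + P Cᶜ := by
    refine (measure_mono ?_).trans (measure_union_le _ _)
    intro ω hω
    by_cases hc : ω ∈ C
    · exact Or.inl ⟨by simpa [abs_of_nonneg (hA n ω)] using hω, hc⟩
    · exact Or.inr hc
  -- complement bound
  have hcomp : P Cᶜ ≤ r / 2 := by
    refine le_of_lt (lt_of_le_of_lt (measure_mono ?_) hnb)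
    intro ω hω
    have h1 : η ≤ En ω := not_lt.mp hω
    have : En ω ≤ |En ω - 0| := by rw [sub_zero]; exact le_abs_self _
    exact h1.trans this
  -- Markov bound on C
  have hmain : P ({ω | ε ≤ A n ω} ∩ C) ≤ r / 2 := by
    have hae : AEMeasurable (fun ω => ENNReal.ofReal (A n ω)) (P.restrict C) :=
      ((hint n).aestronglyMeasurable.aemeasurable.ennreal_ofReal).restrict
    have hmarkov := mul_meas_ge_le_lintegral₀ hae (ENNReal.ofReal ε)
    have hsetEq : {x | ENNReal.ofReal ε ≤ ENNReal.ofReal (A n x)} = {ω | ε ≤ A n ω} := by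
      ext x
      simp [ENNReal.ofReal_le_ofReal_iff (hA n x)]
    rw [hsetEq, Measure.restrict_apply' hCm] at hmarkov
    have hlint : ∫⁻ ω, ENNReal.ofReal (A n ω) ∂(P.restrict C)
        = ENNReal.ofReal (∫ ω in C, A n ω ∂P) :=
      (ofReal_integral_eq_lintegral_ofReal ((hint n).restrict)
        (Filter.Eventually.of_forall fun ω => hA n ω)).symm
    have hcond : ∫ ω in C, A n ω ∂P = ∫ ω in C, En ω ∂P :=
      (setIntegral_condExp (hF n) (hint n) hCF).symm
    have hbound : ∫ ω in C, En ω ∂P ≤ η := by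
      have h1 : ∫ ω in C, En ω ∂P ≤ ∫ _ in C, η ∂P := by
        refine setIntegral_mono_on integrable_condExp.integrableOn
          (integrableOn_const (measure_lt_top _ _).ne) hCm ?_
        intro ω hω
        exact le_of_lt hω
      have h2 : ∫ _ in C, η ∂P = (P C).toReal * η := by
        rw [setIntegral_const, smul_eq_mul]
        rfl
      have h3 : (P C).toReal ≤ 1 := by
        have := prob_le_one (μ := P) (s := C)
        simpa using ENNReal.toReal_mono ENNReal.one_ne_top this
      calc ∫ ω in C, En ω ∂P ≤ (P C).toReal * η := h1.trans_eq h2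
        _ ≤ 1 * η := by nlinarith
        _ = η := one_mul η
    have hkey : ENNReal.ofReal ε * P ({ω | ε ≤ A n ω} ∩ C) ≤ ENNReal.ofReal η := by
      calc ENNReal.ofReal ε * P ({ω | ε ≤ A n ω} ∩ C) ≤ _ := hmarkov
        _ = ENNReal.ofReal (∫ ω in C, A n ω ∂P) := hlint
        _ ≤ ENNReal.ofReal η := ENNReal.ofReal_le_ofReal (hcond.trans_le hbound)
    have hεne : ENNReal.ofReal ε ≠ 0 := (ENNReal.ofReal_pos.2 hε).ne'
    have hεtop : ENNReal.ofReal ε ≠ ⊤ := ENNReal.ofReal_ne_top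
    have hdiv : P ({ω | ε ≤ A n ω} ∩ C) ≤ ENNReal.ofReal η / ENNReal.ofReal ε := by
      rw [ENNReal.le_div_iff_mul_le (Or.inl hεne) (Or.inl hεtop), mul_comm]
      exact hkey
    have heq : ENNReal.ofReal η / ENNReal.ofReal ε = r / 2 := by
      rw [hη, ENNReal.ofReal_mul hε.le, mul_comm, mul_div_assoc,
        ENNReal.div_self hεne hεtop, mul_one, hoft]
    exact hdiv.trans_eq heq
  calc P {ω | ε ≤ |A n ω - 0|} ≤ P ({ω | ε ≤ A n ω} ∩ C) + P Cᶜ := hsplit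
    _ ≤ r / 2 + r / 2 := add_le_add hmain hcomp
    _ = r := ENNReal.add_halves r
    _ ≤ δ := min_le_left _ _

end
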